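/- There exists a constant C > 0 such that for every finite set P of points in the unit square [0,1]² ⊆ ℝ² (with the Euclidean distance) and every depot o ∈ [0,1]², the optimal tour cost satisfies T(o, P) ≤ C·(√|P| + 1). By rescaling, the optimal tour through n points in a square of area A from a depot in that square has length at most C·(√(nA) + √A), which is the √(nA) scaling underlying the Beardwood–Halton–Hammersley routing-cost estimate. -/

import Mathlib

noncomputable section

/-- Length of a walk through a list of points in a metric space. -/
def walkLen {X : Type*} [MetricSpace X] : List X → ℝ
  | [] => 0
  | [_] => 0
  | a :: b :: rest => dist a b + walkLen (b :: rest)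

/-- Closed-walk length `L(o; q₁, …, q_m)`: leave the depot `o`, visit the points
in order, and return to `o`.  For the empty sequence this is `dist o o = 0`. -/
def closedWalkLen {X : Type*} [MetricSpace X] (o : X) (l : List X) : ℝ :=
  walkLen (o :: l ++ [o])

/-- Optimal tour cost `T(o, P)`: the infimum of the closed-walk lengths over all
orderings (permutations) of the finite set `P`; `T(o, ∅) = 0`. -/
def optTourCost {X : Type*} [MetricSpace X] (o : X) (P : Finset X) : ℝ :=
  sInf (closedWalkLen o '' {l : List X | l.Perm P.toList})

lemma walkLen_nonneg {X : Type*} [MetricSpace X] : ∀ l : List X, 0 ≤ walkLen l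
  | [] => le_refl 0
  | [_] => le_refl 0
  | a :: b :: rest => by
    rw [walkLen]
    exact add_nonneg dist_nonneg (walkLen_nonneg (b :: rest))

lemma walkLen_append_singleton {X : Type*} [MetricSpace X] :
    ∀ (l : List X) (a x : X),
      walkLen ((a :: l) ++ [x]) =
        walkLen (a :: l) + dist ((a :: l).getLast (List.cons_ne_nil _ _)) x := by
  intro l
  induction l with
  | nil =>
    intro a x
    simp [walkLen]
  | cons b t ih =>
    intro a x
    have h1 : ((a :: b :: t) ++ [x]) = a :: ((b :: t) ++ [x]) := by simp
    rw [h1]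
    have h2 : walkLen (a :: ((b :: t) ++ [x]))
        = dist a b + walkLen ((b :: t) ++ [x]) := by
      cases t <;> rfl
    rw [h2, ih b x, walkLen]
    rw [List.getLast_cons (List.cons_ne_nil _ _)]
    ring

lemma walkLen_le_chain {X : Type*} [MetricSpace X] (f : X → ℝ) (ε : ℝ)
    (rr : X → X → Prop) :
    ∀ (l : List X) (a : X),
      (∀ x y, x ∈ a :: l → y ∈ a :: l → rr x y → dist x y ≤ f y - f x + ε) →
      List.Chain' rr (a :: l) →
      walkLen (a :: l) ≤ f ((a :: l).getLast (List.cons_ne_nil _ _)) - f a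
        + (l.length : ℝ) * ε := by
  intro l
  induction l with
  | nil =>
    intro a _ _
    simp [walkLen]
  | cons b t ih =>
    intro a hd hc
    have hc' : List.Chain' rr (b :: t) := hc.tail
    have hrab : rr a b := List.isChain_cons_cons.mp hc |>.1
    have hd' : ∀ x y, x ∈ b :: t → y ∈ b :: t → rr x y → dist x y ≤ f y - f x + ε := by
      intro x y hx hy
      exact hd x y (List.mem_cons_of_mem _ hx) (List.mem_cons_of_mem _ hy)
    have h1 := ih b hd' hc'
    have h2 : dist a b ≤ f b - f a + ε :=
      hd a b (List.mem_cons_self) (List.mem_cons_of_mem _ (List.mem_cons_self)) hrab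
    have h3 : walkLen (a :: b :: t) = dist a b + walkLen (b :: t) := rfl
    rw [h3, List.getLast_cons (List.cons_ne_nil _ _)]
    have hlen : ((b :: t).length : ℝ) = (t.length : ℝ) + 1 := by
      simp [List.length_cons]
    calc dist a b + walkLen (b :: t)
        ≤ (f b - f a + ε) + (f ((b :: t).getLast (List.cons_ne_nil _ _)) - f b
            + (t.length : ℝ) * ε) := add_le_add h2 h1
      _ = f ((b :: t).getLast (List.cons_ne_nil _ _)) - f a + ((t.length : ℝ) + 1) * ε := by
          ring
      _ = _ := by rw [← hlen]

lemma dist_le_sum_abs (p q : EuclideanSpace ℝ (Fin 2)) :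
    dist p q ≤ |p 0 - q 0| + |p 1 - q 1| := by
  rw [EuclideanSpace.dist_eq, Fin.sum_univ_two]
  have h0 : dist (p 0) (q 0) = |p 0 - q 0| := Real.dist_eq _ _
  have h1 : dist (p 1) (q 1) = |p 1 - q 1| := Real.dist_eq _ _
  rw [h0, h1]
  have hle : |p 0 - q 0| ^ 2 + |p 1 - q 1| ^ 2 ≤ (|p 0 - q 0| + |p 1 - q 1|) ^ 2 := by
    nlinarith [abs_nonneg (p 0 - q 0), abs_nonneg (p 1 - q 1)]
  calc Real.sqrt (|p 0 - q 0| ^ 2 + |p 1 - q 1| ^ 2)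
      ≤ Real.sqrt ((|p 0 - q 0| + |p 1 - q 1|) ^ 2) := Real.sqrt_le_sqrt hle
    _ = |p 0 - q 0| + |p 1 - q 1| := by
        rw [Real.sqrt_sq (by positivity)]

lemma dist_le_two {p q : EuclideanSpace ℝ (Fin 2)}
    (hp : ∀ i, p i ∈ Set.Icc (0 : ℝ) 1) (hq : ∀ i, q i ∈ Set.Icc (0 : ℝ) 1) :
    dist p q ≤ 2 := by
  have h := dist_le_sum_abs p q
  have h0 : |p 0 - q 0| ≤ 1 := by
    rw [abs_le]
    constructor <;> [linarith [(hp 0).1, (hp 0).2, (hq 0).1, (hq 0).2];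
      linarith [(hp 0).1, (hp 0).2, (hq 0).1, (hq 0).2]]
  have h1 : |p 1 - q 1| ≤ 1 := by
    rw [abs_le]
    constructor <;> [linarith [(hp 1).1, (hp 1).2, (hq 1).1, (hq 1).2];
      linarith [(hp 1).1, (hp 1).2, (hq 1).1, (hq 1).2]]
  linarith

/-- BHH-type upper bound: there is a universal constant `C > 0` such that for
every finite set `P` of points in the unit square and every depot `o` in the
unit square, the optimal tour cost satisfies `T(o, P) ≤ C·(√|P| + 1)`. -/
theorem optTourCost_le_sqrt_card :
    ∃ C : ℝ, 0 < C ∧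
      ∀ (o : EuclideanSpace ℝ (Fin 2)) (P : Finset (EuclideanSpace ℝ (Fin 2))),
        (∀ i, o i ∈ Set.Icc (0 : ℝ) 1) →
        (∀ p ∈ P, ∀ i, p i ∈ Set.Icc (0 : ℝ) 1) →
        optTourCost o P ≤ C * (Real.sqrt P.card + 1) := by
  classical
  refine ⟨8, by norm_num, ?_⟩
  intro o P ho hP
  have hbdd : BddBelow (closedWalkLen o '' {l : List (EuclideanSpace ℝ (Fin 2)) |
      l.Perm P.toList}) := by
    refine ⟨0, ?_⟩
    rintro x ⟨l, -, rfl⟩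
    exact walkLen_nonneg _
  have hsqrt_nonneg : (0 : ℝ) ≤ Real.sqrt P.card := Real.sqrt_nonneg _
  -- the sInf is at most the cost of any particular ordering
  by_cases hPe : P = ∅
  · subst hPe
    have hmem : closedWalkLen o [] ∈ closedWalkLen o ''
        {l : List (EuclideanSpace ℝ (Fin 2)) | l.Perm (∅ : Finset _).toList} := by
      exact ⟨[], by simp, rfl⟩
    have h0 : closedWalkLen o [] = 0 := by
      simp [closedWalkLen, walkLen]
    have := csInf_le hbdd hmem
    rw [h0] at this
    refine le_trans this ?_
    positivity
  -- nonempty case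
  set n : ℕ := P.card with hn
  have hn1 : 1 ≤ n := Finset.card_pos.mpr (Finset.nonempty_iff_ne_empty.mpr hPe)
  have hsn : (1 : ℝ) ≤ Real.sqrt n := by
    rw [show (1 : ℝ) = Real.sqrt 1 by simp]
    exact Real.sqrt_le_sqrt (by exact_mod_cast hn1)
  set k : ℕ := ⌈Real.sqrt n⌉₊ with hk
  have hk1 : 1 ≤ k := Nat.one_le_ceil_iff.mpr (by linarith)
  have hkpos : (0 : ℝ) < k := by exact_mod_cast hk1
  have hk_ge : Real.sqrt n ≤ (k : ℝ) := Nat.le_ceil _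
  have hk_le : (k : ℝ) ≤ Real.sqrt n + 1 := le_of_lt (Nat.ceil_lt_add_one (by positivity))
  -- strip index and potential function
  set strip : EuclideanSpace ℝ (Fin 2) → ℤ := fun p => ⌊(k : ℝ) * p 1⌋ with hstrip
  set f : EuclideanSpace ℝ (Fin 2) → ℝ := fun p => p 0 + 3 * (strip p : ℝ) with hf
  set rr : EuclideanSpace ℝ (Fin 2) → EuclideanSpace ℝ (Fin 2) → Prop :=
    fun p q => strip p < strip q ∨ (strip p = strip q ∧ p 0 ≤ q 0) with hrr
  set le : EuclideanSpace ℝ (Fin 2) → EuclideanSpace ℝ (Fin 2) → Bool :=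
    fun p q => decide (rr p q) with hle
  have hle_iff : ∀ p q, le p q = true ↔ rr p q := by
    intro p q; simp [hle]
  have htrans : ∀ a b c, le a b = true → le b c = true → le a c = true := by
    intro a b c hab hbc
    rw [hle_iff] at *
    rcases hab with h1 | ⟨h1, h1'⟩ <;> rcases hbc with h2 | ⟨h2, h2'⟩
    · exact Or.inl (h1.trans h2)
    · exact Or.inl (h2 ▸ h1)
    · exact Or.inl (h1 ▸ h2)
    · exact Or.inr ⟨h1.trans h2, h1'.trans h2'⟩
  have htotal : ∀ a b, (le a b || le b a) = true := by
    intro a b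
    rw [Bool.or_eq_true, hle_iff, hle_iff]
    rcases lt_trichotomy (strip a) (strip b) with h | h | h
    · exact Or.inl (Or.inl h)
    · rcases le_total (a 0) (b 0) with h' | h'
      · exact Or.inl (Or.inr ⟨h, h'⟩)
      · exact Or.inr (Or.inr ⟨h.symm, h'⟩)
    · exact Or.inr (Or.inl h)
  set l : List (EuclideanSpace ℝ (Fin 2)) := P.toList.mergeSort le with hl
  have hperm : l.Perm P.toList := List.mergeSort_perm _ _
  have hmem_sq : ∀ p ∈ l, ∀ i, p i ∈ Set.Icc (0 : ℝ) 1 := by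
    intro p hp
    exact hP p (Finset.mem_toList.mp (hperm.mem_iff.mp hp))
  have hsorted : List.Pairwise (fun a b => le a b = true) l :=
    List.pairwise_mergeSort htrans htotal _
  have hchain : List.Chain' rr l := by
    have := hsorted.isChain
    exact this.imp (fun a b h => (hle_iff a b).mp h)
  -- bounds on strip and f for points in the square
  have hstrip_bounds : ∀ p : EuclideanSpace ℝ (Fin 2), (∀ i, p i ∈ Set.Icc (0 : ℝ) 1) →
      (0 : ℝ) ≤ (strip p : ℝ) ∧ (strip p : ℝ) ≤ k := by
    intro p hp
    have h1 : (0 : ℝ) ≤ (k : ℝ) * p 1 := mul_nonneg (le_of_lt hkpos) (hp 1).1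
    have h2 : (k : ℝ) * p 1 ≤ k := by
      nlinarith [(hp 1).2]
    constructor
    · exact_mod_cast Int.floor_nonneg.mpr h1
    · calc (strip p : ℝ) ≤ (k : ℝ) * p 1 := Int.floor_le _
        _ ≤ k := h2
  have hf_bounds : ∀ p : EuclideanSpace ℝ (Fin 2), (∀ i, p i ∈ Set.Icc (0 : ℝ) 1) →
      (0 : ℝ) ≤ f p ∧ f p ≤ 1 + 3 * k := by
    intro p hp
    obtain ⟨hs0, hs1⟩ := hstrip_bounds p hp
    constructor
    · simp only [hf]
      linarith [(hp 0).1]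
    · simp only [hf]
      linarith [(hp 0).2]
  -- key step inequality
  have hkey : ∀ x y, x ∈ l → y ∈ l → rr x y → dist x y ≤ f y - f x + 1 / k := by
    intro x y hx hy hxy
    have hxs := hmem_sq x hx
    have hys := hmem_sq y hy
    rcases hxy with h | ⟨h, h'⟩
    · -- different strips: dist ≤ 2 ≤ f y - f x + 1/k
      have hd2 : dist x y ≤ 2 := dist_le_two hxs hys
      have hs : (strip x : ℝ) + 1 ≤ (strip y : ℝ) := by exact_mod_cast h
      have hx0 : x 0 ≤ 1 := (hxs 0).2
      have hy0 : (0 : ℝ) ≤ y 0 := (hys 0).1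
      have hfdiff : (2 : ℝ) ≤ f y - f x := by
        simp only [hf]
        linarith
      have : (0 : ℝ) ≤ 1 / k := div_nonneg zero_le_one (le_of_lt hkpos)
      linarith
    · -- same strip
      have habs : |x 1 - y 1| ≤ 1 / k := by
        have hfl : ⌊(k : ℝ) * x 1⌋ = ⌊(k : ℝ) * y 1⌋ := h
        have := Int.abs_sub_lt_one_of_floor_eq_floor hfl
        have h2 : |(k : ℝ) * (x 1 - y 1)| < 1 := by
          rw [mul_sub]; exact this
        rw [abs_mul, abs_of_pos hkpos] at h2
        rw [le_div_iff₀ hkpos]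
        linarith [h2, mul_comm ((k : ℝ)) |x 1 - y 1|]
      have hd := dist_le_sum_abs x y
      have h0 : |x 0 - y 0| = y 0 - x 0 := by
        rw [abs_sub_comm, abs_of_nonneg (by linarith)]
      have hfdiff : f y - f x = y 0 - x 0 := by
        simp only [hf, h]
        ring
      rw [hfdiff]
      linarith [hd, h0 ▸ (le_refl |x 0 - y 0|)]
  -- now bound the closed walk for the sorted list
  have hmeml : closedWalkLen o l ∈ closedWalkLen o ''
      {l' : List (EuclideanSpace ℝ (Fin 2)) | l'.Perm P.toList} := ⟨l, hperm, rfl⟩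
  refine le_trans (csInf_le hbdd hmeml) ?_
  -- l is nonempty
  have hlen : l.length = n := by
    rw [hperm.length_eq, Finset.length_toList]
  have hlne : l ≠ [] := by
    intro h
    rw [h] at hlen
    simp at hlen
    omega
  obtain ⟨a, t, hat⟩ := List.exists_cons_of_ne_nil hlne
  rw [hat] at hchain hkey hlen hmem_sq
  rw [show closedWalkLen o l = closedWalkLen o (a :: t) by rw [hat]]
  have hcwl : closedWalkLen o (a :: t) =
      dist o a + (walkLen (a :: t) + dist ((a :: t).getLast (List.cons_ne_nil _ _)) o) := by
    rw [closedWalkLen]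
    have h1 : (o :: (a :: t) ++ [o]) = o :: ((a :: t) ++ [o]) := by simp
    rw [h1]
    have h2 : walkLen (o :: ((a :: t) ++ [o])) = dist o a + walkLen ((a :: t) ++ [o]) := by
      cases t <;> rfl
    rw [h2, walkLen_append_singleton]
  rw [hcwl]
  have hwb := walkLen_le_chain f (1 / k) rr (t) a hkey hchain
  have hlast_mem : (a :: t).getLast (List.cons_ne_nil _ _) ∈ (a :: t) :=
    List.getLast_mem _
  have ha_mem : a ∈ (a :: t) := List.mem_cons_self
  have hfa := hf_bounds a (hmem_sq a ha_mem)
  have hfl := hf_bounds _ (hmem_sq _ hlast_mem)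
  have hd1 : dist o a ≤ 2 := dist_le_two ho (hmem_sq a ha_mem)
  have hd2 : dist ((a :: t).getLast (List.cons_ne_nil _ _)) o ≤ 2 := by
    rw [dist_comm]
    exact dist_le_two ho (hmem_sq _ hlast_mem)
  have htlen : (t.length : ℝ) ≤ n := by
    have : t.length + 1 = n := by
      simpa [List.length_cons] using hlen
    have : t.length ≤ n := by omega
    exact_mod_cast this
  have hdivk : (n : ℝ) / k ≤ Real.sqrt n := by
    have hsq : Real.sqrt n * Real.sqrt n = n :=
      Real.mul_self_sqrt (Nat.cast_nonneg n)
    rw [div_le_iff₀ hkpos]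
    nlinarith [hsq, hk_ge, hsqrt_nonneg]
  have hstep : (t.length : ℝ) * (1 / k) ≤ Real.sqrt n := by
    have h1 : (t.length : ℝ) * (1 / k) ≤ (n : ℝ) * (1 / k) := by
      exact mul_le_mul_of_nonneg_right htlen (div_nonneg zero_le_one (le_of_lt hkpos))
    have h2 : (n : ℝ) * (1 / k) = (n : ℝ) / k := by ring
    linarith [h2 ▸ h1, hdivk]
  have hwalk : walkLen (a :: t) ≤ 1 + 3 * k + Real.sqrt n := by
    calc walkLen (a :: t)
        ≤ f ((a :: t).getLast (List.cons_ne_nil _ _)) - f a + (t.length : ℝ) * (1 / k) :=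
          hwb
      _ ≤ (1 + 3 * k) - 0 + Real.sqrt n := by
          gcongr
          exacts [hfl.2, hfa.1]
      _ = 1 + 3 * k + Real.sqrt n := by ring
  have hkb : (3 : ℝ) * k ≤ 3 * Real.sqrt n + 3 := by linarith
  calc dist o a + (walkLen (a :: t) + dist ((a :: t).getLast (List.cons_ne_nil _ _)) o)
      ≤ 2 + ((1 + 3 * k + Real.sqrt n) + 2) := by
        gcongr
    _ ≤ 2 + ((1 + (3 * Real.sqrt n + 3) + Real.sqrt n) + 2) := by linarith
    _ = 4 * Real.sqrt n + 8 := by ring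
    _ ≤ 8 * (Real.sqrt n + 1) := by linarith
    _ = 8 * (Real.sqrt P.card + 1) := by rw [hn]

end
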